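/- Every value in the interval [1/√2, ∞) is attained by the h* statistic: for every real number c ≥ 1/√2 there exist three real numbers x_1, x_2, x_3 with x_3 = max{x_1, x_2, x_3} and x_1 ≠ x_2 whose h* statistic (with m = 3) equals c. Consequently the range of h* is exactly [1/√2, ∞). -/

import Mathlib

open Finset Real

/-- Sum of squared pairwise differences over all unordered pairs of distinct
indices, both different from the reference index `m`. -/
noncomputable def pairSum {n : ℕ} (x : Fin n → ℝ) (m : Fin n) : ℝ :=
  ∑ p ∈ Finset.univ.filter (fun p : Fin n × Fin n => p.1 < p.2 ∧ p.1 ≠ m ∧ p.2 ≠ m),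
    (x p.1 - x p.2) ^ 2

/-- The h* statistic with reference index `m`. -/
noncomputable def hstar {n : ℕ} (x : Fin n → ℝ) (m : Fin n) : ℝ :=
  Real.sqrt (((∑ k, (x k - x m) ^ 2) / ((n : ℝ) - 1)) /
    (pairSum x m / (((n : ℝ) - 1) * ((n : ℝ) - 2) / 2)))

lemma key {n : ℕ} (hn : 3 ≤ n) (x : Fin n → ℝ) (m : Fin n)
    (hmax : ∀ k, x k ≤ x m) :
    pairSum x m ≤ ((n:ℝ) - 2) * ∑ k, (x k - x m) ^ 2 := by
  set a : Fin n → ℝ := fun k => (x k - x m) ^ 2 with ha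
  have ha0 : ∀ k, 0 ≤ a k := fun k => sq_nonneg _
  have step1 : pairSum x m ≤
      ∑ p ∈ Finset.univ.filter
        (fun p : Fin n × Fin n => p.1 < p.2 ∧ p.1 ≠ m ∧ p.2 ≠ m),
        (a p.1 + a p.2) := by
    apply Finset.sum_le_sum
    intro p _
    have h1 := hmax p.1
    have h2 := hmax p.2
    simp only [ha]
    nlinarith
  refine step1.trans ?_
  have hsplit : ∑ p ∈ Finset.univ.filter
        (fun p : Fin n × Fin n => p.1 < p.2 ∧ p.1 ≠ m ∧ p.2 ≠ m),
        (a p.1 + a p.2)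
      = ∑ k, ((univ.filter (fun j => k < j ∧ k ≠ m ∧ j ≠ m)).card
              + (univ.filter (fun i => i < k ∧ i ≠ m ∧ k ≠ m)).card : ℕ) * a k := by
    rw [Finset.sum_add_distrib]
    rw [Finset.sum_filter, Finset.sum_filter, Fintype.sum_prod_type, Fintype.sum_prod_type]
    have e1 : ∀ i : Fin n, (∑ j : Fin n, if i < j ∧ i ≠ m ∧ j ≠ m then a i else 0)
        = ((univ.filter (fun j => i < j ∧ i ≠ m ∧ j ≠ m)).card : ℕ) * a i := by
      intro i
      rw [← Finset.sum_filter, Finset.sum_const, nsmul_eq_mul]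
    have e2 : (∑ i : Fin n, ∑ j : Fin n, if i < j ∧ i ≠ m ∧ j ≠ m then a j else 0)
        = ∑ j : Fin n, ((univ.filter (fun i => i < j ∧ i ≠ m ∧ j ≠ m)).card : ℕ) * a j := by
      rw [Finset.sum_comm]
      congr 1; ext j
      rw [← Finset.sum_filter, Finset.sum_const, nsmul_eq_mul]
    simp only [e1, e2, ← Finset.sum_add_distrib]
    congr 1; ext k
    push_cast
    ring
  rw [hsplit, Finset.mul_sum]
  apply Finset.sum_le_sum
  intro k _
  by_cases hk : k = m
  · subst hk
    simp only [ne_eq, not_true_eq_false, false_and, and_false, Finset.filter_false,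
      Finset.card_empty]
    have : (0:ℝ) ≤ ((n:ℝ) - 2) * a k := by
      apply mul_nonneg _ (ha0 k)
      have : (3:ℝ) ≤ n := by exact_mod_cast hn
      linarith
    simpa using this
  · have hcard : (univ.filter (fun j => k < j ∧ k ≠ m ∧ j ≠ m)).card
        + (univ.filter (fun i => i < k ∧ i ≠ m ∧ k ≠ m)).card = n - 2 := by
      rw [← Finset.card_union_of_disjoint]
      · have : (univ.filter (fun j => k < j ∧ k ≠ m ∧ j ≠ m))
            ∪ (univ.filter (fun i => i < k ∧ i ≠ m ∧ k ≠ m))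
            = ({k, m} : Finset (Fin n))ᶜ := by
          ext j
          simp only [Finset.mem_union, Finset.mem_filter, Finset.mem_univ, true_and,
            Finset.mem_compl, Finset.mem_insert, Finset.mem_singleton]
          constructor
          · rintro (⟨h1, _, h3⟩ | ⟨h1, h3, _⟩) <;> push_neg <;>
              exact ⟨fun he => by subst he; exact lt_irrefl _ h1, h3⟩
          · intro h
            push_neg at h
            obtain ⟨hjk, hjm⟩ := h
            rcases lt_or_gt_of_ne (Ne.symm hjk) with h | h
            · exact Or.inl ⟨h, hk, hjm⟩
            · exact Or.inr ⟨h, hjm, hk⟩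
        rw [this, Finset.card_compl,
          Finset.card_insert_of_notMem (by simpa using hk), Finset.card_singleton,
          Fintype.card_fin]
      · rw [Finset.disjoint_filter]
        rintro j _ ⟨h1, _⟩ ⟨h2, _⟩
        exact absurd (h1.trans h2) (lt_irrefl _)
    rw [hcard]
    apply mul_le_mul_of_nonneg_right _ (ha0 k)
    rw [Nat.cast_sub (by omega)]
    push_cast
    linarith

lemma pairSum_pos {n : ℕ} (x : Fin n → ℝ) (m i j : Fin n)
    (hi : i ≠ m) (hj : j ≠ m) (hij : x i ≠ x j) : 0 < pairSum x m := by
  have hne : i ≠ j := fun h => hij (by rw [h])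
  rcases lt_or_gt_of_ne hne with h | h
  · have hmem : (i, j) ∈ Finset.univ.filter
        (fun p : Fin n × Fin n => p.1 < p.2 ∧ p.1 ≠ m ∧ p.2 ≠ m) := by
      simp [h, hi, hj]
    calc (0:ℝ) < (x i - x j)^2 := by
          have h0 := sub_ne_zero.mpr hij; positivity
      _ ≤ pairSum x m := by
          rw [pairSum]
          exact Finset.single_le_sum (f := fun p : Fin n × Fin n => (x p.1 - x p.2)^2)
            (fun p _ => sq_nonneg _) hmem
  · have hmem : (j, i) ∈ Finset.univ.filter
        (fun p : Fin n × Fin n => p.1 < p.2 ∧ p.1 ≠ m ∧ p.2 ≠ m) := by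
      simp [h, hi, hj]
    calc (0:ℝ) < (x j - x i)^2 := by
          have h0 := sub_ne_zero.mpr hij.symm; positivity
      _ ≤ pairSum x m := by
          rw [pairSum]
          exact Finset.single_le_sum (f := fun p : Fin n × Fin n => (x p.1 - x p.2)^2)
            (fun p _ => sq_nonneg _) hmem

lemma hstar_ge {n : ℕ} (hn : 3 ≤ n) (x : Fin n → ℝ) (m : Fin n)
    (hmax : ∀ k, x k ≤ x m) (i j : Fin n) (hi : i ≠ m) (hj : j ≠ m)
    (hij : x i ≠ x j) : 1 / Real.sqrt 2 ≤ hstar x m := by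
  set S := ∑ k, (x k - x m) ^ 2 with hS
  set P := pairSum x m with hP
  have hP0 : 0 < P := pairSum_pos x m i j hi hj hij
  have hk := key hn x m hmax
  have hN1 : (0:ℝ) < (n:ℝ) - 1 := by
    have : (3:ℝ) ≤ n := by exact_mod_cast hn
    linarith
  have hN2 : (0:ℝ) < (n:ℝ) - 2 := by
    have : (3:ℝ) ≤ n := by exact_mod_cast hn
    linarith
  have harg : (S / ((n:ℝ) - 1)) / (P / (((n:ℝ) - 1) * ((n:ℝ) - 2) / 2))
      = S * ((n:ℝ) - 2) / (2 * P) := by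
    field_simp
  have h12 : (1:ℝ)/2 ≤ S * ((n:ℝ) - 2) / (2 * P) := by
    rw [div_le_div_iff₀ (by norm_num) (by positivity)]
    nlinarith
  rw [hstar, harg]
  have : Real.sqrt (1/2) ≤ Real.sqrt (S * ((n:ℝ) - 2) / (2 * P)) :=
    Real.sqrt_le_sqrt h12
  calc 1 / Real.sqrt 2 = Real.sqrt (1/2) := by
        rw [one_div, one_div, ← Real.sqrt_inv]
    _ ≤ _ := this

lemma pairSum3 (x : Fin 3 → ℝ) : pairSum x 2 = (x 0 - x 1)^2 := by
  simp [pairSum, Finset.sum_filter, Fintype.sum_prod_type, Fin.sum_univ_three]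

lemma exists_triple (c : ℝ) (hc : 1 / Real.sqrt 2 ≤ c) :
    ∃ x : Fin 3 → ℝ, (∀ k, x k ≤ x 2) ∧ x 0 ≠ x 1 ∧ hstar x 2 = c := by
  have h2 : (0:ℝ) < Real.sqrt 2 := Real.sqrt_pos.mpr (by norm_num)
  have hc0 : 0 < c := lt_of_lt_of_le (by positivity) hc
  have hc2 : 1 ≤ 4 * c ^ 2 - 1 := by
    have : 1 / Real.sqrt 2 ≤ c := hc
    have h : (1 / Real.sqrt 2) ^ 2 ≤ c ^ 2 := by
      apply pow_le_pow_left₀ (by positivity) hc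
    have hs : (Real.sqrt 2) ^ 2 = 2 := Real.sq_sqrt (by norm_num)
    rw [div_pow, one_pow, hs] at h
    nlinarith
  set r := Real.sqrt (4 * c ^ 2 - 1) with hr
  have hr2 : r ^ 2 = 4 * c ^ 2 - 1 := Real.sq_sqrt (by linarith)
  have hr1 : 1 ≤ r := by
    rw [show (1:ℝ) = Real.sqrt 1 by simp [Real.sqrt_one]]
    exact Real.sqrt_le_sqrt (by linarith)
  set a := (r - 1) / 2 with ha
  have ha0 : 0 ≤ a := by rw [ha]; linarith
  refine ⟨![-(a+1), -a, 0], ?_, ?_, ?_⟩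
  · intro k
    fin_cases k <;> simp <;> linarith
  · simp only [Matrix.cons_val_zero, Matrix.cons_val_one, Matrix.head_cons]
    intro h; nlinarith [h]
  · rw [hstar, pairSum3]
    have hsum : ∑ k, ((![-(a+1), -a, 0] : Fin 3 → ℝ) k - ![-(a+1), -a, 0] 2)^2
        = 2 * c ^ 2 := by
      simp [Fin.sum_univ_three]
      nlinarith [hr2]
    rw [hsum]
    have hd : ((![-(a+1), -a, 0] : Fin 3 → ℝ) 0 - ![-(a+1), -a, 0] 1)^2 = 1 := by
      simp
    rw [hd]
    norm_num
    exact Real.sqrt_sq hc0.le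

/-- every `c ≥ 1/√2` is attained by the h* statistic for some triple
`x_1, x_2, x_3` with `x_3` the maximum and `x_1 ≠ x_2`; consequently the range of
h* (over all admissible data sets) is exactly `[1/√2, ∞)`. -/
theorem hstar_surjective_onto_Ici :
    (∀ c : ℝ, 1 / Real.sqrt 2 ≤ c →
      ∃ x : Fin 3 → ℝ, (∀ k, x k ≤ x 2) ∧ x 0 ≠ x 1 ∧ hstar x 2 = c) ∧
    {c : ℝ | ∃ (n : ℕ) (x : Fin n → ℝ) (m : Fin n), 3 ≤ n ∧ (∀ k, x k ≤ x m) ∧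
        (∃ i j, i ≠ m ∧ j ≠ m ∧ x i ≠ x j) ∧ hstar x m = c} =
      Set.Ici (1 / Real.sqrt 2) := by
  constructor
  · exact exists_triple
  · ext c
    simp only [Set.mem_setOf_eq, Set.mem_Ici]
    constructor
    · rintro ⟨n, x, m, hn, hmax, ⟨i, j, hi, hj, hij⟩, rfl⟩
      exact hstar_ge hn x m hmax i j hi hj hij
    · intro hc
      obtain ⟨x, h1, h2, h3⟩ := exists_triple c hc
      exact ⟨3, x, 2, le_refl 3, h1, ⟨0, 1, by decide, by decide, h2⟩, h3⟩
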